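/- Let G be a finite group and U = ⋂_{i=1}^n M_i a regular intersection of maximal subgroups M₁,…,M_n. Then |G:U| = ∏_{i=1}^n |G:M_i| (i.e., U is a complete intersection of the M_i), and U either covers or avoids every chief factor of G. -/

import Mathlib

open scoped Pointwise

/-- A finite group `G` is `p`-solvable: it has a normal series whose factors are
`p`-groups or `p'`-groups. -/
def IsPSolvable (p : ℕ) (G : Type*) [Group G] : Prop :=
  ∃ (n : ℕ) (s : Fin (n + 1) → Subgroup G),
    s 0 = ⊥ ∧ s (Fin.last n) = ⊤ ∧
    (∀ i : Fin n, s i.castSucc ≤ s i.succ) ∧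
    (∀ i : Fin n, ((s i.castSucc).subgroupOf (s i.succ)).Normal) ∧
    (∀ i : Fin n, (∃ k, (s i.castSucc).relIndex (s i.succ) = p ^ k) ∨
      ¬ p ∣ (s i.castSucc).relIndex (s i.succ))

/-- `X` is a minimal normal subgroup. -/
def IsMinNormal {G : Type*} [Group G] (X : Subgroup G) : Prop :=
  X ≠ ⊥ ∧ X.Normal ∧ ∀ Y : Subgroup G, Y.Normal → Y ≤ X → Y = ⊥ ∨ Y = X

/-- `X ≤ G/A` and `Y ≤ G/B` are isomorphic as `G`-modules (`G` acting by
conjugation through the respective quotients). -/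
def ConjIso {G : Type*} [Group G] {A B : Subgroup G} [A.Normal] [B.Normal]
    (X : Subgroup (G ⧸ A)) (Y : Subgroup (G ⧸ B)) : Prop :=
  ∃ e : X ≃* Y, ∀ (g : G) (x x' : X),
    (x' : G ⧸ A) = QuotientGroup.mk g * (x : G ⧸ A) * (QuotientGroup.mk g)⁻¹ →
    ((e x' : Y) : G ⧸ B) = QuotientGroup.mk g * ((e x : Y) : G ⧸ B) * (QuotientGroup.mk g)⁻¹

/-- `X ≤ G/A` is isomorphic, as a `G`-module, to the dual module
`Y* = Hom(Y, ℂˣ)` of `Y ≤ G/B`, where `(λ^g)(y^g) = λ(y)`. -/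
def ConjDualIso {G : Type*} [Group G] {A B : Subgroup G} [A.Normal] [B.Normal]
    (X : Subgroup (G ⧸ A)) (Y : Subgroup (G ⧸ B)) : Prop :=
  ∃ e : X ≃* (Y →* ℂˣ), ∀ (g : G) (x x' : X) (y y' : Y),
    (x' : G ⧸ A) = QuotientGroup.mk g * (x : G ⧸ A) * (QuotientGroup.mk g)⁻¹ →
    (y' : G ⧸ B) = QuotientGroup.mk g * (y : G ⧸ B) * (QuotientGroup.mk g)⁻¹ →
    e x' y' = e x y

/-- `U` is the regular intersection of the maximal subgroups `M i`. -/
def IsRegularIntersectionOf {G : Type*} [Group G] {ι : Type*} [Fintype ι]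
    (U : Subgroup G) (M : ι → Subgroup G) : Prop :=
  (∀ i, IsCoatom (M i)) ∧
  (∀ p : ℕ, p.Prime → p ∣ U.index → IsPSolvable p G) ∧
  U = ⨅ i, M i ∧
  ∀ i j, i ≠ j →
    ∀ (X : Subgroup (G ⧸ (M i).normalCore)) (Y : Subgroup (G ⧸ (M j).normalCore)),
      IsMinNormal X → IsMinNormal Y → ¬ ConjIso X Y ∧ ¬ ConjDualIso X Y

set_option linter.unusedSectionVars false

lemma Set.Finite.exists_minimal_wrt {α β : Type*} [PartialOrder β] (f : α → β) (s : Set α)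
    (h : s.Finite) (hs : s.Nonempty) : ∃ a ∈ s, ∀ a' ∈ s, f a' ≤ f a → f a = f a' := by
  obtain ⟨a, ha, hmin⟩ := Set.Finite.exists_minimalFor f s h hs
  exact ⟨a, ha, fun a' ha' hle => le_antisymm (hmin ha' hle) hle⟩

namespace Stmt13

open Subgroup

variable {G : Type*} [Group G]

section Helpers

variable [Finite G]

lemma relindex_ne_zero' (H K : Subgroup G) : H.relIndex K ≠ 0 :=
  Subgroup.index_ne_zero_of_finite

lemma index_ne_zero' (H : Subgroup G) : H.index ≠ 0 :=
  Subgroup.index_ne_zero_of_finite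

/-- Second isomorphism theorem for relindex, with the normal subgroup as the "big" side. -/
lemma relindex_sup_of_normal (M T : Subgroup G) (hT : T.Normal) :
    M.relIndex (M ⊔ T) = (M ⊓ T).relIndex T := by
  haveI := hT
  have h1 : (M ⊓ T).relIndex T * T.relIndex (M ⊔ T) = (M ⊓ T).relIndex (M ⊔ T) :=
    relIndex_mul_relIndex _ _ _ inf_le_right le_sup_right
  have h2 : (M ⊓ T).relIndex M * M.relIndex (M ⊔ T) = (M ⊓ T).relIndex (M ⊔ T) :=
    relIndex_mul_relIndex _ _ _ inf_le_left le_sup_left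
  have h3 : T.relIndex (M ⊔ T) = T.relIndex M := Subgroup.relIndex_sup_right M T
  have h4 : (T ⊓ M).relIndex M = T.relIndex M := Subgroup.inf_relIndex_right T M
  have h5 : (M ⊓ T).relIndex M = T.relIndex M := by rw [inf_comm]; exact h4
  have hne : (M ⊓ T).relIndex M ≠ 0 := relindex_ne_zero' _ _
  have : (M ⊓ T).relIndex M * ((M ⊓ T).relIndex T) = (M ⊓ T).relIndex M * (M.relIndex (M ⊔ T)) := by
    rw [h2]; rw [← h1, h3, ← h5]; ring
  exact (Nat.eq_of_mul_eq_mul_left (Nat.pos_of_ne_zero hne) this).symm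

/-- The per-step factorization of a relative index along a normal step. -/
lemma step_identity (A T W : Subgroup G) (hA : A.Normal) (hAT : A ≤ T) :
    A.relIndex T = (A ⊔ (W ⊓ T)).relIndex T * ((W ⊓ A).relIndex (W ⊓ T)) := by
  haveI := hA
  have hJT : (A ⊔ (W ⊓ T)) ≤ T := sup_le hAT inf_le_right
  have hchain : A.relIndex (A ⊔ (W ⊓ T)) * (A ⊔ (W ⊓ T)).relIndex T = A.relIndex T :=
    relIndex_mul_relIndex _ _ _ le_sup_left hJT
  have hsi : A.relIndex (A ⊔ (W ⊓ T)) = A.relIndex (W ⊓ T) := Subgroup.relIndex_sup_left _ _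
  have hinf : A.relIndex (W ⊓ T) = (A ⊓ (W ⊓ T)).relIndex (W ⊓ T) :=
    (Subgroup.inf_relIndex_right A (W ⊓ T)).symm
  have hAWT : A ⊓ (W ⊓ T) = W ⊓ A := by
    rw [inf_comm A (W ⊓ T), inf_assoc, inf_of_le_right hAT]
  rw [← hchain, hsi, hinf, hAWT]
  ring

end Helpers

section Chains

variable [Finite G]

/-- A single chief-series step from `A` to `T`. -/
def ChainStep (A T : Subgroup G) : Prop :=
  ∃ hA : A.Normal, T.Normal ∧ A ≤ T ∧ IsMinNormal (T.map (@QuotientGroup.mk' G _ A hA))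

/-- A chief chain from `A` to `B` passing through the subgroups in `l`. -/
def Chain : Subgroup G → Subgroup G → List (Subgroup G) → Prop
  | A, B, [] => A = B
  | A, B, T :: l => ChainStep A T ∧ Chain T B l

/-- The list of consecutive steps of a chain. -/
def steps : Subgroup G → List (Subgroup G) → List (Subgroup G × Subgroup G)
  | _, [] => []
  | A, T :: l => (A, T) :: steps T l

lemma chain_le : ∀ (A B : Subgroup G) (l : List (Subgroup G)), Chain A B l → A ≤ B := by
  intro A B l
  induction l generalizing A with
  | nil => intro h; exact le_of_eq h
  | cons T l ih =>
    rintro ⟨⟨hA, hT, hAT, _⟩, hc⟩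
    exact hAT.trans (ih T hc)

lemma chain_append {A B C : Subgroup G} {l₁ l₂ : List (Subgroup G)}
    (h₁ : Chain A B l₁) (h₂ : Chain B C l₂) :
    Chain A C (l₁ ++ l₂) ∧ steps A (l₁ ++ l₂) = steps A l₁ ++ steps B l₂ := by
  induction l₁ generalizing A with
  | nil => cases h₁; exact ⟨h₂, rfl⟩
  | cons T l ih =>
    obtain ⟨hs, hc⟩ := h₁
    obtain ⟨h1, h2⟩ := ih hc
    exact ⟨⟨hs, h1⟩, by simp [steps, h2]⟩

lemma mem_steps : ∀ (A B : Subgroup G) (l : List (Subgroup G)), Chain A B l →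
    ∀ P Q : Subgroup G, (P, Q) ∈ steps A l → ChainStep P Q := by
  intro A B l
  induction l generalizing A with
  | nil => intro _ P Q h; simp [steps] at h
  | cons T l ih =>
    rintro ⟨hs, hc⟩ P Q h
    simp only [steps, List.mem_cons] at h
    rcases h with h | h
    · obtain ⟨rfl, rfl⟩ := Prod.mk.injEq .. ▸ h
      exact hs
    · exact ih T hc P Q h

/-- The `d`-value of a subgroup `W` at a step `(A, T)`. -/
noncomputable def dval (W : Subgroup G) (t : Subgroup G × Subgroup G) : ℕ :=
  (t.1 ⊔ (W ⊓ t.2)).relIndex t.2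

lemma telescope (W : Subgroup G) : ∀ (A B : Subgroup G) (l : List (Subgroup G)),
    Chain A B l →
    A.relIndex B = ((steps A l).map (dval W)).prod * ((W ⊓ A).relIndex (W ⊓ B)) := by
  intro A B l
  induction l generalizing A with
  | nil =>
    intro h; cases h
    simp [steps]
  | cons T l ih =>
    rintro ⟨⟨hA, hT, hAT, hmin⟩, hc⟩
    have hTB : T ≤ B := chain_le T B l hc
    have h1 : A.relIndex T * T.relIndex B = A.relIndex B :=
      Subgroup.relIndex_mul_relIndex _ _ _ hAT hTB
    have h2 := step_identity A T W hA hAT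
    have h3 := ih T hc
    have h4 : (W ⊓ A).relIndex (W ⊓ T) * (W ⊓ T).relIndex (W ⊓ B) =
        (W ⊓ A).relIndex (W ⊓ B) :=
      Subgroup.relIndex_mul_relIndex _ _ _ (inf_le_inf_left W hAT) (inf_le_inf_left W hTB)
    simp only [steps, List.map_cons, List.prod_cons]
    rw [← h1, h2, h3, ← h4]
    show (A ⊔ W ⊓ T).relIndex T * _ * _ = dval W (A, T) * _ * _
    unfold dval
    ring

lemma dval_dvd_of_le {V W : Subgroup G} (h : V ≤ W) (t : Subgroup G × Subgroup G) :
    dval W t ∣ dval V t := by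
  unfold dval
  exact Subgroup.relIndex_dvd_of_le_left _ (sup_le_sup_left (inf_le_inf_right _ h) _)

lemma dval_dvd_relindex (W : Subgroup G) {A T : Subgroup G} (hAT : A ≤ T) :
    dval W (A, T) ∣ A.relIndex T :=
  Subgroup.relIndex_dvd_of_le_left _ le_sup_left

/-- Existence of a minimal member of the nonempty set of normal subgroups strictly
between `A` and `B`. -/
lemma exists_min_normal_between {A B : Subgroup G} (hA : A.Normal) (hB : B.Normal)
    (hAB : A < B) :
    ∃ T : Subgroup G, T.Normal ∧ A < T ∧ T ≤ B ∧
      ∀ P : Subgroup G, P.Normal → A < P → P ≤ T → P = T := by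
  haveI : Finite (Subgroup G) := Finite.of_injective _ SetLike.coe_injective
  have hfin : ({P : Subgroup G | P.Normal ∧ A < P ∧ P ≤ B}).Finite := Set.toFinite _
  obtain ⟨T, hT, hmin⟩ := hfin.exists_minimal_wrt id _ ⟨B, hB, hAB, le_rfl⟩
  exact ⟨T, hT.1, hT.2.1, hT.2.2, fun P hP hAP hPT =>
    (hmin P ⟨hP, hAP, hPT.trans hT.2.2⟩ hPT).symm⟩

lemma chainStep_of_minimal {A T : Subgroup G} (hA : A.Normal) (hT : T.Normal)
    (hAT : A < T) (hmin : ∀ P : Subgroup G, P.Normal → A < P → P ≤ T → P = T) :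
    ChainStep A T := by
  refine ⟨hA, hT, hAT.le, ?_, ?_, ?_⟩
  · -- nontrivial
    intro hbot
    rw [Subgroup.map_eq_bot_iff, QuotientGroup.ker_mk'] at hbot
    exact hAT.not_ge hbot
  · exact hT.map _ (QuotientGroup.mk'_surjective A)
  · intro Y hY hYle
    by_cases hYbot : Y = ⊥
    · exact Or.inl hYbot
    right
    set P : Subgroup G := Y.comap (QuotientGroup.mk' A) ⊓ T with hP
    haveI := hY.comap (QuotientGroup.mk' A)
    haveI := hT
    have hPn : P.Normal := Subgroup.normal_inf_normal _ _
    have hAleP : A ≤ P := by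
      refine le_inf (fun a ha => ?_) hAT.le
      have h1 : (QuotientGroup.mk' A) a = 1 := by
        rw [QuotientGroup.mk'_apply, QuotientGroup.eq_one_iff]; exact ha
      simp only [Subgroup.mem_comap, h1]
      exact Y.one_mem
    have hAneP : A ≠ P := by
      intro hEq
      apply hYbot
      rw [eq_bot_iff]
      intro y hy
      obtain ⟨t, ht, rfl⟩ := hYle hy
      have htP : t ∈ P := Subgroup.mem_inf.mpr ⟨Subgroup.mem_comap.mpr hy, ht⟩
      rw [← hEq] at htP
      simp only [Subgroup.mem_bot, QuotientGroup.mk'_apply, QuotientGroup.eq_one_iff]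
      exact htP
    have hPT : P = T := hmin P hPn (lt_of_le_of_ne hAleP hAneP) inf_le_right
    have hTle : T ≤ Y.comap (QuotientGroup.mk' A) := by rw [← hPT]; exact inf_le_left
    have : T.map (QuotientGroup.mk' A) ≤ Y := by
      rw [Subgroup.map_le_iff_le_comap]; exact hTle
    exact le_antisymm hYle this

lemma exists_chain : ∀ (n : ℕ) (A B : Subgroup G), A.Normal → B.Normal → A ≤ B →
    A.relIndex B = n → ∃ l, Chain A B l := by
  intro n
  induction n using Nat.strong_induction_on with
  | _ n ih =>
    intro A B hA hB hAB hn
    by_cases hEq : A = B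
    · exact ⟨[], hEq⟩
    have hlt : A < B := lt_of_le_of_ne hAB hEq
    obtain ⟨T, hT, hAT, hTB, hmin⟩ := exists_min_normal_between hA hB hlt
    have hstep := chainStep_of_minimal hA hT hAT hmin
    have h1 : A.relIndex T * T.relIndex B = A.relIndex B :=
      Subgroup.relIndex_mul_relIndex _ _ _ hAT.le hTB
    have hATne : A.relIndex T ≠ 1 := by
      intro h
      exact hAT.not_ge (Subgroup.relIndex_eq_one.mp h)
    have hrelTB : T.relIndex B < n := by
      rw [← hn, ← h1]
      have h2 : T.relIndex B ≠ 0 := relindex_ne_zero' _ _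
      have h3 : A.relIndex T ≠ 0 := relindex_ne_zero' _ _
      have : 2 ≤ A.relIndex T := by omega
      calc T.relIndex B < 2 * T.relIndex B := by omega
        _ ≤ A.relIndex T * T.relIndex B := Nat.mul_le_mul_right _ this
    obtain ⟨l, hl⟩ := ih _ hrelTB T B hT hB hTB rfl
    exact ⟨T :: l, hstep, hl⟩

end Chains


section PSolvable

/-- Cardinality of a join with a normal subgroup divides the product of cardinalities. -/
lemma card_sup_dvd_mul {X : Type*} [Group X] [Finite X] (A K : Subgroup X) (hK : K.Normal) :
    Nat.card ↥(A ⊔ K) ∣ Nat.card A * Nat.card K := by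
  haveI := hK
  have h1 : (K.subgroupOf (A ⊔ K)).index * Nat.card (K.subgroupOf (A ⊔ K)) =
      Nat.card ↥(A ⊔ K) := Subgroup.index_mul_card _
  have h2 : (K.subgroupOf (A ⊔ K)).index = K.relIndex A := Subgroup.relIndex_sup_right A K
  have h3 : K.relIndex A ∣ Nat.card A := Subgroup.index_dvd_card _
  have h4 : Nat.card (K.subgroupOf (A ⊔ K)) = Nat.card K :=
    Nat.card_congr (Subgroup.subgroupOfEquivOfLe le_sup_right).toEquiv
  rw [← h1, h2, h4]
  exact mul_dvd_mul h3 dvd_rfl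

lemma card_finset_sup_dvd {X : Type*} [Group X] [Finite X] {ι : Type*} [DecidableEq ι]
    (f : ι → Subgroup X) (hf : ∀ i, (f i).Normal) (s : Finset ι) :
    (s.sup f).Normal ∧ Nat.card ↥(s.sup f) ∣ ∏ i ∈ s, Nat.card ↥(f i) := by
  induction s using Finset.induction with
  | empty =>
    rw [Finset.sup_empty]
    exact ⟨inferInstance, by simp⟩
  | @insert a s hnotmem ih =>
    rw [Finset.sup_insert, Finset.prod_insert hnotmem]
    haveI := hf a
    haveI := ih.1
    refine ⟨inferInstance, ?_⟩
    exact (card_sup_dvd_mul (f a) (s.sup f) ih.1).trans (mul_dvd_mul dvd_rfl ih.2)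

/-- Quotients inherit `p`-solvability. -/
lemma isPSolvable_quotient [Finite G] {p : ℕ} (hp : p.Prime) (T : Subgroup G) (hT : T.Normal)
    (h : IsPSolvable p G) : IsPSolvable p (G ⧸ T) := by
  haveI := hT
  obtain ⟨n, s, h0, hl, hmono, hnorm, hfac⟩ := h
  refine ⟨n, fun i => (s i).map (QuotientGroup.mk' T),
    by show (s 0).map _ = ⊥; rw [h0]; exact Subgroup.map_bot _,
    by show (s (Fin.last n)).map _ = ⊤
       rw [hl]; exact Subgroup.map_top_of_surjective _ (QuotientGroup.mk'_surjective T), ?_, ?_, ?_⟩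
  · intro i; exact Subgroup.map_mono (hmono i)
  · intro i
    rw [Subgroup.normal_subgroupOf_iff (Subgroup.map_mono (hmono i))]
    rintro h' k' ⟨a, ha, rfl⟩ ⟨b, hb, rfl⟩
    have := (Subgroup.normal_subgroupOf_iff (hmono i)).mp (hnorm i) a b ha hb
    exact ⟨b * a * b⁻¹, this, by simp⟩
  · intro i
    have key : ((s i.castSucc).map (QuotientGroup.mk' T)).relIndex
        ((s i.succ).map (QuotientGroup.mk' T)) ∣ (s i.castSucc).relIndex (s i.succ) := by
      set f := QuotientGroup.mk' T
      set fi := f.subgroupMap (s i.succ)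
      have hfi : Function.Surjective fi := f.subgroupMap_surjective (s i.succ)
      have hle : (s i.castSucc).subgroupOf (s i.succ) ≤
          (((s i.castSucc).map f).subgroupOf ((s i.succ).map f)).comap fi := by
        intro x hx
        rw [Subgroup.mem_subgroupOf] at hx
        simp only [Subgroup.mem_comap, Subgroup.mem_subgroupOf]
        exact ⟨(x : G), hx, rfl⟩
      calc ((s i.castSucc).map f).relIndex ((s i.succ).map f)
          = ((((s i.castSucc).map f).subgroupOf ((s i.succ).map f)).comap fi).index :=
            (Subgroup.index_comap_of_surjective _ hfi).symm
        _ ∣ ((s i.castSucc).subgroupOf (s i.succ)).index := Subgroup.index_dvd_of_le hle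
        _ = (s i.castSucc).relIndex (s i.succ) := rfl
    rcases hfac i with ⟨k, hk⟩ | hnd
    · left
      rw [hk] at key
      obtain ⟨m, _, hm⟩ := (Nat.dvd_prime_pow hp).mp key
      exact ⟨m, hm⟩
    · right
      intro hdvd
      exact hnd (hdvd.trans key)

end PSolvable



section Pchief

lemma map_finset_sup {X Y : Type*} [Group X] [Group Y] (f : X →* Y) {ι : Type*}
    [DecidableEq ι] (s : Finset ι) (g : ι → Subgroup X) :
    (s.sup g).map f = s.sup (fun i => (g i).map f) := by
  induction s using Finset.induction with
  | empty => simp [Subgroup.map_bot]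
  | @insert a s hnotmem ih => simp [Finset.sup_insert, Subgroup.map_sup, ih]

lemma conj_comp {X : Type*} [Group X] (g h : X) :
    ((MulAut.conj g).toMonoidHom.comp (MulAut.conj h).toMonoidHom) =
      (MulAut.conj (g * h)).toMonoidHom := by
  ext x
  simp [MulAut.conj_apply, mul_assoc]

/-- A minimal normal subgroup of a finite group with a subnormal `p`/`p'`-series is a
`p`-group or a `p'`-group. -/
lemma pchief_aux {p : ℕ} (hp : p.Prime) :
    ∀ (n : ℕ) (H : Type*) (_ : Group H) (_ : Finite H) (s : Fin (n + 1) → Subgroup H),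
      s 0 = ⊥ → s (Fin.last n) = ⊤ →
      (∀ i : Fin n, s i.castSucc ≤ s i.succ) →
      (∀ i : Fin n, ((s i.castSucc).subgroupOf (s i.succ)).Normal) →
      (∀ i : Fin n, (∃ k, (s i.castSucc).relIndex (s i.succ) = p ^ k) ∨
        ¬ p ∣ (s i.castSucc).relIndex (s i.succ)) →
      ∀ N : Subgroup H, IsMinNormal N →
      (∃ k, Nat.card ↥N = p ^ k) ∨ ¬ p ∣ Nat.card ↥N := by
  intro n
  induction n with
  | zero =>
    intro H _ _ s h0 hl _ _ _ N hN
    exfalso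
    apply hN.1
    have h01 : (0 : Fin 1) = Fin.last 0 := by ext; rfl
    have hbt : (⊥ : Subgroup H) = ⊤ := by rw [← h0, h01, hl]
    rw [eq_bot_iff, hbt]
    exact le_top
  | succ n ih =>
    intro H _ _ s h0 hl hmono hnorm hfac N hN
    obtain ⟨hNbot, hNnorm, hNmin⟩ := hN
    haveI := hNnorm
    set i0 : Fin (n + 1) := Fin.last n with hi0
    set Q := s i0.castSucc with hQdef
    have hsucc : i0.succ = Fin.last (n + 1) := Fin.succ_last n
    have hQtop : s i0.succ = ⊤ := by rw [hsucc, hl]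
    have hQn : Q.Normal := by
      have h1 := hnorm i0
      rw [hQtop] at h1
      rw [Subgroup.normal_subgroupOf_iff le_top] at h1
      exact ⟨fun x hx g => h1 x g hx trivial⟩
    haveI := hQn
    rcases hNmin (N ⊓ Q) (Subgroup.normal_inf_normal N Q) inf_le_left with hcap | hcap
    · -- N ⊓ Q = ⊥
      have hrel := hfac i0
      rw [hQtop, Subgroup.relIndex_top_right] at hrel
      have hinj : Function.Injective ((QuotientGroup.mk' Q).comp N.subtype) := by
        rw [← MonoidHom.ker_eq_bot_iff, eq_bot_iff]
        intro x hx
        rw [MonoidHom.mem_ker, MonoidHom.comp_apply] at hx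
        have hxQ : (x : H) ∈ Q := by
          rwa [QuotientGroup.mk'_apply, QuotientGroup.eq_one_iff] at hx
        have hmem : (x : H) ∈ N ⊓ Q := ⟨x.2, hxQ⟩
        rw [hcap] at hmem
        rw [Subgroup.mem_bot] at hmem ⊢
        exact Subtype.ext hmem
      have hdvd : Nat.card ↥N ∣ Q.index := by
        have h2 := Subgroup.card_dvd_of_injective _ hinj
        rwa [← Subgroup.index_eq_card] at h2
      rcases hrel with ⟨k, hk⟩ | hnd
      · left
        rw [hk] at hdvd
        obtain ⟨m, _, hm⟩ := (Nat.dvd_prime_pow hp).mp hdvd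
        exact ⟨m, hm⟩
      · right
        intro h2
        exact hnd (h2.trans hdvd)
    · -- N ≤ Q
      have hNQ : N ≤ Q := by rw [← hcap]; exact inf_le_right
      -- the restricted series on ↥Q
      set s' : Fin (n + 1) → Subgroup ↥Q := fun j => (s j.castSucc).subgroupOf Q with hs'
      have hmonoS : Monotone s := Fin.monotone_iff_le_succ.mpr hmono
      have hidx : ∀ j : Fin n, (j.succ).castSucc = (j.castSucc).succ := by
        intro j; ext; simp
      have hleQ : ∀ j : Fin (n + 1), s j.castSucc ≤ Q :=
        fun j => hmonoS (Fin.castSucc_le_castSucc_iff.mpr (Fin.le_last j))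
      have h0' : s' 0 = ⊥ := by
        show (s (0 : Fin (n + 1)).castSucc).subgroupOf Q = ⊥
        have hz : ((0 : Fin (n + 1)).castSucc : Fin (n + 2)) = 0 := by ext; simp
        rw [hz, h0, Subgroup.bot_subgroupOf]
      have hl' : s' (Fin.last n) = ⊤ := by
        show (s (Fin.last n).castSucc).subgroupOf Q = ⊤
        exact Subgroup.subgroupOf_self Q
      have hmono' : ∀ j : Fin n, s' j.castSucc ≤ s' j.succ := by
        intro j
        show (s (j.castSucc).castSucc).subgroupOf Q ≤ (s (j.succ).castSucc).subgroupOf Q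
        exact Subgroup.comap_mono (by rw [hidx j]; exact hmono j.castSucc)
      have hnorm' : ∀ j : Fin n, ((s' j.castSucc).subgroupOf (s' j.succ)).Normal := by
        intro j
        rw [Subgroup.normal_subgroupOf_iff (hmono' j)]
        intro x q hx hq
        have hx' : (x : H) ∈ s (j.castSucc).castSucc := hx
        have hq' : (q : H) ∈ s (j.castSucc).succ := by
          have : (q : H) ∈ s (j.succ).castSucc := hq
          rwa [hidx j] at this
        have hres := (Subgroup.normal_subgroupOf_iff (hmono j.castSucc)).mp
          (hnorm j.castSucc) _ _ hx' hq'
        show ((q * x * q⁻¹ : ↥Q) : H) ∈ s (j.castSucc).castSucc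
        simpa using hres
      have hfac' : ∀ j : Fin n, (∃ k, (s' j.castSucc).relIndex (s' j.succ) = p ^ k) ∨
          ¬ p ∣ (s' j.castSucc).relIndex (s' j.succ) := by
        intro j
        have hrw : (s' j.castSucc).relIndex (s' j.succ) =
            (s (j.castSucc).castSucc).relIndex (s (j.castSucc).succ) := by
          show ((s (j.castSucc).castSucc).subgroupOf Q).relIndex
            ((s (j.succ).castSucc).subgroupOf Q) = _
          rw [hidx j]
          exact Subgroup.relIndex_subgroupOf (by rw [← hidx j]; exact hleQ j.succ)
        rw [hrw]
        exact hfac j.castSucc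
      -- a minimal Q-normal subgroup inside N
      haveI : Finite (Subgroup ↥Q) := Finite.of_injective _ SetLike.coe_injective
      have hNsgbot : N.subgroupOf Q ≠ ⊥ := by
        rw [Ne, Subgroup.subgroupOf_eq_bot]
        intro hdisj
        exact hNbot (by
          have : N ⊓ Q = ⊥ := disjoint_iff.mp hdisj
          rwa [hcap] at this)
      have hSne : ({P : Subgroup ↥Q | P ≠ ⊥ ∧ P.Normal ∧ P ≤ N.subgroupOf Q}).Nonempty :=
        ⟨N.subgroupOf Q, hNsgbot, Subgroup.normal_subgroupOf, le_rfl⟩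
      obtain ⟨N₀, hN₀mem, hN₀min⟩ :=
        (Set.toFinite _).exists_minimal_wrt id _ hSne
      obtain ⟨hN₀bot, hN₀norm, hN₀le⟩ := hN₀mem
      have hN₀isMin : IsMinNormal N₀ := by
        refine ⟨hN₀bot, hN₀norm, fun Y hYn hYle => ?_⟩
        by_cases hYb : Y = ⊥
        · exact Or.inl hYb
        · exact Or.inr (hN₀min Y ⟨hYb, hYn, hYle.trans hN₀le⟩ hYle).symm
      have hcard₀ := ih ↥Q inferInstance inferInstance s' h0' hl' hmono' hnorm' hfac' N₀ hN₀isMin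
      -- conjugates of N₀ inside H
      set N₀' := N₀.map Q.subtype with hN₀'
      have hN₀'le : N₀' ≤ N := by
        have h2 : N₀' ≤ (N.subgroupOf Q).map Q.subtype := Subgroup.map_mono hN₀le
        rwa [Subgroup.subgroupOf_map_subtype, inf_of_le_left hNQ] at h2
      set C : H → Subgroup H := fun h => N₀'.map (MulAut.conj h).toMonoidHom with hC
      have hCle : ∀ h, C h ≤ N := by
        rintro h x ⟨y, hy, rfl⟩
        show (MulAut.conj h).toMonoidHom y ∈ N
        have : (MulAut.conj h).toMonoidHom y = h * y * h⁻¹ := rfl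
        rw [this]
        exact hNnorm.conj_mem y (hN₀'le hy) h
      have hconjinj : ∀ h : H, Function.Injective ((MulAut.conj h).toMonoidHom : H → H) :=
        fun h => (MulAut.conj h).injective
      have hCcard : ∀ h, Nat.card ↥(C h) = Nat.card ↥N₀ := by
        intro h
        have e1 := Subgroup.equivMapOfInjective N₀ Q.subtype Q.subtype_injective
        have e2 := Subgroup.equivMapOfInjective N₀' _ (hconjinj h)
        exact (Nat.card_congr e2.toEquiv).symm.trans (Nat.card_congr e1.toEquiv).symm
      have hCQ : ∀ h, C h ≤ Q := fun h => (hCle h).trans hNQ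
      have hN₀'conj : ∀ (q y : H), q ∈ Q → y ∈ N₀' → q * y * q⁻¹ ∈ N₀' := by
        intro q y hq hy
        obtain ⟨y₀, hy₀, rfl⟩ := hy
        have hconj := hN₀norm.conj_mem y₀ hy₀ ⟨q, hq⟩
        exact ⟨_, hconj, rfl⟩
      have hCnorm : ∀ h, ((C h).subgroupOf Q).Normal := by
        intro h
        rw [Subgroup.normal_subgroupOf_iff (hCQ h)]
        intro x q hx hq
        obtain ⟨y, hy, rfl⟩ := hx
        have hq' : h⁻¹ * q * h ∈ Q := by
          have := hQn.conj_mem q hq h⁻¹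
          simpa [mul_assoc] using this
        refine ⟨(h⁻¹ * q * h) * y * (h⁻¹ * q * h)⁻¹, hN₀'conj _ _ hq' hy, ?_⟩
        show h * ((h⁻¹ * q * h) * y * (h⁻¹ * q * h)⁻¹) * h⁻¹ = q * (h * y * h⁻¹) * q⁻¹
        group
      -- N is the join of the conjugates
      have hCshift : ∀ g h : H, (C h).map (MulAut.conj g).toMonoidHom = C (g * h) := by
        intro g h
        rw [hC]
        show (N₀'.map _).map _ = _
        rw [Subgroup.map_map, conj_comp]
      have key : N = ⨆ h : H, C h := by
        set NN := ⨆ h : H, C h with hNN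
        have hmap : ∀ g : H, NN.map (MulAut.conj g).toMonoidHom = NN := by
          intro g
          rw [hNN, Subgroup.map_iSup]
          apply le_antisymm
          · exact iSup_le fun h => (hCshift g h).le.trans (le_iSup _ (g * h))
          · refine iSup_le fun h => ?_
            have h2 : C h = (C (g⁻¹ * h)).map (MulAut.conj g).toMonoidHom := by
              rw [hCshift g (g⁻¹ * h), mul_inv_cancel_left]
            rw [h2]
            exact le_iSup (fun h' => (C h').map (MulAut.conj g).toMonoidHom) (g⁻¹ * h)
        have hNNnorm : NN.Normal := by
          constructor
          intro x hx g
          have h2 : (MulAut.conj g).toMonoidHom x ∈ NN.map (MulAut.conj g).toMonoidHom :=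
            ⟨x, hx, rfl⟩
          rw [hmap g] at h2
          exact h2
        have hNNle : NN ≤ N := iSup_le hCle
        have hNNbot : NN ≠ ⊥ := by
          intro hb
          apply hN₀bot
          have hC1 : C 1 ≤ NN := le_iSup _ 1
          rw [hb, le_bot_iff] at hC1
          have hCone : C 1 = N₀' := by
            rw [hC]
            show N₀'.map _ = N₀'
            have : (MulAut.conj (1 : H)).toMonoidHom = MonoidHom.id H := by
              ext x; simp
            rw [this]
            exact Subgroup.map_id N₀'
          rw [hCone] at hC1
          rw [hN₀'] at hC1
          exact (Subgroup.map_eq_bot_iff_of_injective N₀ Q.subtype_injective).mp hC1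
        rcases hNmin NN hNNnorm hNNle with h | h
        · exact absurd h hNNbot
        · exact h.symm
      -- cardinality computation via a Finset sup in ↥Q
      haveI : Fintype H := Fintype.ofFinite H
      classical
      set PQ : H → Subgroup ↥Q := fun h => (C h).subgroupOf Q with hPQ
      have hPQcard : ∀ h, Nat.card ↥(PQ h) = Nat.card ↥N₀ := by
        intro h
        rw [← hCcard h]
        exact Nat.card_congr (Subgroup.subgroupOfEquivOfLe (hCQ h)).toEquiv
      have hsupmap : (Finset.univ.sup PQ).map Q.subtype = N := by
        rw [map_finset_sup]
        have h2 : (fun h => (PQ h).map Q.subtype) = C := by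
          funext h
          rw [hPQ]
          show ((C h).subgroupOf Q).map Q.subtype = C h
          rw [Subgroup.subgroupOf_map_subtype, inf_of_le_left (hCQ h)]
        rw [h2, key]
        rw [Finset.sup_eq_iSup]
        simp
      have hcardN : Nat.card ↥N = Nat.card ↥(Finset.univ.sup PQ) := by
        rw [← hsupmap]
        exact (Nat.card_congr
          (Subgroup.equivMapOfInjective _ _ Q.subtype_injective).toEquiv).symm
      obtain ⟨hsupnorm, hsupdvd⟩ := card_finset_sup_dvd PQ hCnorm Finset.univ
      rcases hcard₀ with ⟨k, hk⟩ | hnd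
      · left
        have hprod : ∏ h ∈ Finset.univ, Nat.card ↥(PQ h) = p ^ (k * Fintype.card H) := by
          rw [Finset.prod_congr rfl (fun h _ => (hPQcard h).trans hk), Finset.prod_const,
            Finset.card_univ, ← pow_mul]
        rw [hprod] at hsupdvd
        obtain ⟨m, _, hm⟩ := (Nat.dvd_prime_pow hp).mp hsupdvd
        exact ⟨m, by rw [hcardN, hm]⟩
      · right
        intro hdvd
        rw [hcardN] at hdvd
        have h3 : p ∣ ∏ h ∈ Finset.univ, Nat.card ↥(PQ h) := hdvd.trans hsupdvd
        obtain ⟨h, _, hh⟩ := hp.prime.exists_mem_finset_dvd h3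
        rw [hPQcard h] at hh
        exact hnd hh

end Pchief



section Structure

/-- A minimal normal subgroup of `p`-power order is abelian. -/
lemma minnormal_pgroup_comm {X : Type*} [Group X] [Finite X] {p : ℕ} (hp : p.Prime)
    {F : Subgroup X} (hF : IsMinNormal F) {k : ℕ} (hcard : Nat.card ↥F = p ^ k) :
    ∀ a b, a ∈ F → b ∈ F → a * b = b * a := by
  haveI : Fact p.Prime := ⟨hp⟩
  have hpg : IsPGroup p ↥F := IsPGroup.of_card hcard
  haveI hFnt : Nontrivial ↥F := (Subgroup.nontrivial_iff_ne_bot F).mpr hF.1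
  haveI := hpg.center_nontrivial
  set Z := (Subgroup.center ↥F).map F.subtype with hZ
  have hZbot : Z ≠ ⊥ := by
    obtain ⟨z, hz⟩ := exists_ne (1 : Subgroup.center ↥F)
    intro hb
    apply hz
    have hmem : ((z : ↥F) : X) ∈ Z := ⟨(z : ↥F), z.2, rfl⟩
    rw [hb, Subgroup.mem_bot] at hmem
    ext
    exact hmem
  have hZle : Z ≤ F := by
    rintro _ ⟨w, hw, rfl⟩
    exact w.2
  have hZnorm : Z.Normal := by
    constructor
    rintro _ ⟨w, hw, rfl⟩ g
    have hmem : g * (w : X) * g⁻¹ ∈ F := hF.2.1.conj_mem _ w.2 g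
    refine ⟨⟨g * (w : X) * g⁻¹, hmem⟩, ?_, rfl⟩
    rw [SetLike.mem_coe, Subgroup.mem_center_iff]
    intro u
    have hu' : g⁻¹ * (u : X) * g ∈ F := by
      have := hF.2.1.conj_mem _ u.2 g⁻¹
      simpa [mul_assoc] using this
    have hcomm := Subgroup.mem_center_iff.mp (SetLike.mem_coe.mp hw) ⟨g⁻¹ * (u : X) * g, hu'⟩
    have hcoe : (g⁻¹ * (u : X) * g) * (w : X) = (w : X) * (g⁻¹ * (u : X) * g) := by
      exact congrArg Subtype.val hcomm
    apply Subtype.ext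
    show (u : X) * (g * (w : X) * g⁻¹) = (g * (w : X) * g⁻¹) * (u : X)
    have h2 : g * ((g⁻¹ * (u : X) * g) * (w : X)) * g⁻¹ =
        g * ((w : X) * (g⁻¹ * (u : X) * g)) * g⁻¹ := by rw [hcoe]
    calc (u : X) * (g * (w : X) * g⁻¹) = g * ((g⁻¹ * (u : X) * g) * (w : X)) * g⁻¹ := by group
      _ = g * ((w : X) * (g⁻¹ * (u : X) * g)) * g⁻¹ := h2
      _ = (g * (w : X) * g⁻¹) * (u : X) := by group
  rcases hF.2.2 Z hZnorm hZle with h | h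
  · exact absurd h hZbot
  · intro a b ha hb
    have haZ : a ∈ Z := h.symm ▸ ha
    obtain ⟨w, hw, rfl⟩ := haZ
    have hcomm := Subgroup.mem_center_iff.mp (SetLike.mem_coe.mp hw) ⟨b, hb⟩
    have hcoe := congrArg Subtype.val hcomm
    exact hcoe.symm



variable [Finite G]

lemma min_normal_p_or_p' {p : ℕ} (hp : p.Prime) (hsol : IsPSolvable p G)
    {N : Subgroup G} (hN : IsMinNormal N) :
    (∃ k, Nat.card ↥N = p ^ k) ∨ ¬ p ∣ Nat.card ↥N := by
  obtain ⟨n, s, h0, hl, hmono, hnorm, hfac⟩ := hsol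
  exact pchief_aux hp n G inferInstance inferInstance s h0 hl hmono hnorm hfac N hN

/-- Existence of a minimal normal subgroup below a given nontrivial normal subgroup. -/
lemma exists_minnormal_le {B : Subgroup G} (hB : B.Normal) (hBbot : B ≠ ⊥) :
    ∃ N : Subgroup G, IsMinNormal N ∧ N ≤ B := by
  haveI : Finite (Subgroup G) := Finite.of_injective _ SetLike.coe_injective
  obtain ⟨N, hNmem, hNmin⟩ := (Set.toFinite _).exists_minimal_wrt id
    {P : Subgroup G | P ≠ ⊥ ∧ P.Normal ∧ P ≤ B} ⟨B, hBbot, hB, le_rfl⟩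
  refine ⟨N, ⟨hNmem.1, hNmem.2.1, fun Y hYn hYle => ?_⟩, hNmem.2.2⟩
  by_cases hYb : Y = ⊥
  · exact Or.inl hYb
  · exact Or.inr (hNmin Y ⟨hYb, hYn, hYle.trans hNmem.2.2⟩ hYle).symm

/-- The structure of the primitive quotient `G ⧸ M.normalCore` for a maximal subgroup
`M` whose index is divisible only by primes `p` such that `G` is `p`-solvable. -/
lemma primitive_structure {M : Subgroup G} (hM : IsCoatom M)
    (hps : ∀ p : ℕ, p.Prime → p ∣ M.index → IsPSolvable p G) :
    ∃ N' : Subgroup (G ⧸ M.normalCore),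
      IsMinNormal N' ∧
      (∀ X : Subgroup (G ⧸ M.normalCore), IsMinNormal X → X = N') ∧
      Nat.card ↥N' = M.index ∧
      M ⊔ N'.comap (QuotientGroup.mk' M.normalCore) = ⊤ := by
  set f := QuotientGroup.mk' M.normalCore with hf
  have hfsurj : Function.Surjective f := QuotientGroup.mk'_surjective M.normalCore
  have hker : f.ker = M.normalCore := QuotientGroup.ker_mk' _
  set M' := M.map f with hM'
  have hcomapM' : M'.comap f = M := by
    rw [hM', Subgroup.comap_map_eq, hker, sup_of_le_left M.normalCore_le]
  have hM'coatom : IsCoatom M' := by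
    constructor
    · intro h
      apply hM.1
      rw [← hcomapM', h, Subgroup.comap_top]
    · intro P hP
      have hle : M ≤ P.comap f :=
        le_trans (le_of_eq hcomapM'.symm) (Subgroup.comap_mono hP.le)
      have hne : M ≠ P.comap f := by
        intro h
        exact hP.ne (hM'.trans ((congrArg (Subgroup.map f) h).trans
          (Subgroup.map_comap_eq_self_of_surjective hfsurj P)))
      have htop : P.comap f = ⊤ := hM.2 _ (lt_of_le_of_ne hle hne)
      refine (Subgroup.map_comap_eq_self_of_surjective hfsurj P).symm.trans ?_
      rw [htop]
      exact Subgroup.map_top_of_surjective _ hfsurj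
  have hcorefree : ∀ Y : Subgroup (G ⧸ M.normalCore), Y.Normal → Y ≤ M' → Y = ⊥ := by
    intro Y hYn hYle
    have h1 : Y.comap f ≤ M := le_trans (Subgroup.comap_mono hYle) (le_of_eq hcomapM')
    haveI h2 : (Y.comap f).Normal := hYn.comap f
    have h3 : Y.comap f ≤ M.normalCore := Subgroup.normal_le_normalCore.mpr h1
    have h4 : Y = (Y.comap f).map f := (Subgroup.map_comap_eq_self_of_surjective hfsurj Y).symm
    rw [h4, eq_bot_iff]
    calc (Y.comap f).map f ≤ M.normalCore.map f := Subgroup.map_mono h3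
      _ = ⊥ := (Subgroup.map_eq_bot_iff _).mpr (le_of_eq hker.symm)
  -- a minimal normal subgroup of the quotient
  have htopbot : (⊤ : Subgroup (G ⧸ M.normalCore)) ≠ ⊥ := by
    intro h
    apply hM'coatom.1
    rw [eq_top_iff, h]
    exact bot_le
  obtain ⟨N', hN'min, _⟩ := exists_minnormal_le (B := (⊤ : Subgroup (G ⧸ M.normalCore)))
    inferInstance htopbot
  -- a prime dividing the index
  have hMidx1 : M.index ≠ 1 := by rw [Ne, Subgroup.index_eq_one]; exact hM.1
  obtain ⟨p, hp, hpdvd⟩ := Nat.exists_prime_and_dvd hMidx1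
  have hpsol : IsPSolvable p (G ⧸ M.normalCore) :=
    isPSolvable_quotient hp M.normalCore (Subgroup.normalCore_normal M) (hps p hp hpdvd)
  have hM'idx : M'.index = M.index := by
    rw [hM', Subgroup.index_map, f.range_eq_top_of_surjective hfsurj, Subgroup.index_top,
      mul_one, hker, sup_of_le_left M.normalCore_le]
  -- main claim for any minimal normal subgroup
  have hmain : ∀ X : Subgroup (G ⧸ M.normalCore), IsMinNormal X →
      (X ⊓ M' = ⊥ ∧ X ⊔ M' = ⊤ ∧ Nat.card ↥X = M.index ∧
       (∀ a b, a ∈ X → b ∈ X → a * b = b * a)) := by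
    intro X hX
    obtain ⟨hXbot, hXnorm, hXmin⟩ := hX
    haveI := hXnorm
    have hXnleM' : ¬ X ≤ M' := fun h => hXbot (hcorefree X hXnorm h)
    have hsup : X ⊔ M' = ⊤ := by
      refine hM'coatom.2 _ (lt_of_le_of_ne le_sup_right fun h => hXnleM' ?_)
      rw [h]
      exact le_sup_left
    have hrel2 : M'.index = (M' ⊓ X).relIndex X := by
      have hrel : M'.relIndex (M' ⊔ X) = (M' ⊓ X).relIndex X :=
        relindex_sup_of_normal M' X hXnorm
      rw [← hrel, sup_comm M' X, hsup, Subgroup.relIndex_top_right]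
    have hpX : p ∣ Nat.card ↥X := by
      have hd : (M' ⊓ X).relIndex X ∣ Nat.card ↥X := Subgroup.index_dvd_card _
      rw [← hrel2, hM'idx] at hd
      exact hpdvd.trans hd
    obtain ⟨k, hcardX⟩ : ∃ k, Nat.card ↥X = p ^ k := by
      rcases min_normal_p_or_p' hp hpsol ⟨hXbot, hXnorm, hXmin⟩ with h | h
      · exact h
      · exact absurd hpX h
    have hXab : ∀ a b, a ∈ X → b ∈ X → a * b = b * a :=
      minnormal_pgroup_comm hp ⟨hXbot, hXnorm, hXmin⟩ hcardX
    have hinf : X ⊓ M' = ⊥ := by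
      refine hcorefree _ ?_ inf_le_right
      constructor
      intro z hz g
      have hg : g ∈ X ⊔ M' := by rw [hsup]; exact Subgroup.mem_top g
      have hg' : g ∈ (X : Set (G ⧸ M.normalCore)) * (M' : Set (G ⧸ M.normalCore)) := by
        rw [← Subgroup.normal_mul]
        exact hg
      obtain ⟨x, hx, m, hm, hxm⟩ := hg'
      have hxm' : x * m = g := hxm
      have h1 : m * z * m⁻¹ ∈ X ⊓ M' :=
        ⟨hXnorm.conj_mem z hz.1 m, (Subgroup.mul_mem _ (Subgroup.mul_mem _ hm hz.2) (inv_mem hm))⟩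
      have h2 : x * (m * z * m⁻¹) * x⁻¹ = m * z * m⁻¹ := by
        have h3 := hXab x (m * z * m⁻¹) hx h1.1
        rw [h3]
        group
      have h4 : (x * m) * z * (x * m)⁻¹ = x * (m * z * m⁻¹) * x⁻¹ := by group
      rw [← hxm', h4, h2]
      exact h1
    have hcard : Nat.card ↥X = M.index := by
      rw [hM'idx] at hrel2
      rw [hrel2, inf_comm, hinf, Subgroup.relIndex_bot_left]
    exact ⟨hinf, hsup, hcard, hXab⟩
  -- uniqueness
  have huniq : ∀ X : Subgroup (G ⧸ M.normalCore), IsMinNormal X → X = N' := by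
    intro X hX
    by_contra hne
    haveI := hX.2.1
    haveI := hN'min.2.1
    obtain ⟨hXinf, hXsup, hXcard, hXab⟩ := hmain X hX
    have hXY : X ⊓ N' = ⊥ := by
      rcases hX.2.2 (X ⊓ N') (Subgroup.normal_inf_normal _ _) inf_le_left with h | h
      · exact h
      · have hXleY : X ≤ N' := by rw [← h]; exact inf_le_right
        rcases hN'min.2.2 X hX.2.1 hXleY with h2 | h2
        · exact absurd h2 hX.1
        · exact absurd h2 hne
    have hcomm : ∀ x y : G ⧸ M.normalCore, x ∈ X → y ∈ N' → x * y = y * x := by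
      intro x y hx hy
      have h1 : x * y * x⁻¹ * y⁻¹ ∈ X ⊓ N' := by
        constructor
        · have : x * (y * x⁻¹ * y⁻¹) ∈ X :=
            Subgroup.mul_mem _ hx (by simpa [mul_assoc] using hX.2.1.conj_mem x⁻¹ (inv_mem hx) y)
          simpa [mul_assoc] using this
        · have : (x * y * x⁻¹) * y⁻¹ ∈ N' :=
            Subgroup.mul_mem _ (hN'min.2.1.conj_mem y hy x) (inv_mem hy)
          simpa [mul_assoc] using this
      rw [hXY, Subgroup.mem_bot] at h1
      have h3 : x * y * x⁻¹ * y⁻¹ * (y * x) = 1 * (y * x) := by rw [h1]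
      calc x * y = x * y * x⁻¹ * y⁻¹ * (y * x) := by group
        _ = 1 * (y * x) := h3
        _ = y * x := one_mul _
    set Cz := Subgroup.centralizer (X : Set (G ⧸ M.normalCore)) with hCz
    have hXle : X ≤ Cz := fun x hx =>
      Subgroup.mem_centralizer_iff.mpr fun y hy => hXab y x hy hx
    have hYle : N' ≤ Cz := fun y hy =>
      Subgroup.mem_centralizer_iff.mpr fun x hx => hcomm x y hx hy
    have hCznorm : Cz.Normal := by
      constructor
      intro z hz g
      rw [Subgroup.mem_centralizer_iff] at hz ⊢
      intro x hx
      have hx' : g⁻¹ * x * g ∈ X := by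
        have := hX.2.1.conj_mem x hx g⁻¹
        simpa [mul_assoc] using this
      have h2 := hz _ hx'
      calc x * (g * z * g⁻¹) = g * ((g⁻¹ * x * g) * z) * g⁻¹ := by group
        _ = g * (z * (g⁻¹ * x * g)) * g⁻¹ := by rw [h2]
        _ = (g * z * g⁻¹) * x := by group
    have hCzM'norm : (Cz ⊓ M').Normal := by
      constructor
      intro z hz g
      have hg' : g ∈ (X : Set (G ⧸ M.normalCore)) * (M' : Set (G ⧸ M.normalCore)) := by
        rw [← Subgroup.normal_mul, hXsup]
        exact Subgroup.mem_top g
      obtain ⟨x, hx, m, hm, hxm⟩ := hg'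
      have hxm' : x * m = g := hxm
      have h1 : m * z * m⁻¹ ∈ Cz ⊓ M' :=
        ⟨hCznorm.conj_mem z hz.1 m, Subgroup.mul_mem _ (Subgroup.mul_mem _ hm hz.2) (inv_mem hm)⟩
      have h2 : x * (m * z * m⁻¹) * x⁻¹ = m * z * m⁻¹ := by
        have h3 := Subgroup.mem_centralizer_iff.mp h1.1 x (SetLike.mem_coe.mp hx)
        rw [h3]
        group
      have h4 : (x * m) * z * (x * m)⁻¹ = x * (m * z * m⁻¹) * x⁻¹ := by group
      rw [← hxm', h4, h2]
      exact h1
    have hCzM'bot : Cz ⊓ M' = ⊥ := hcorefree _ hCzM'norm inf_le_right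
    have hCzeq : Cz ≤ X := by
      intro c hc
      have hc' : c ∈ (X : Set (G ⧸ M.normalCore)) * (M' : Set (G ⧸ M.normalCore)) := by
        rw [← Subgroup.normal_mul, hXsup]
        exact Subgroup.mem_top c
      obtain ⟨x, hx, m, hm, hxm⟩ := hc'
      have hxm' : x * m = c := hxm
      have hmCz : m ∈ Cz := by
        have hmx : m = x⁻¹ * c := by rw [← hxm']; group
        rw [hmx]
        exact Subgroup.mul_mem _ (inv_mem (hXle (SetLike.mem_coe.mp hx))) hc
      have hmm : m ∈ Cz ⊓ M' := ⟨hmCz, SetLike.mem_coe.mp hm⟩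
      rw [hCzM'bot, Subgroup.mem_bot] at hmm
      rw [← hxm', hmm, mul_one]
      exact SetLike.mem_coe.mp hx
    have hYX : N' ≤ X := hYle.trans hCzeq
    rcases hX.2.2 N' hN'min.2.1 hYX with h | h
    · exact absurd h hN'min.1
    · exact hne h.symm
  obtain ⟨hinf, hsup, hcard, hab⟩ := hmain N' hN'min
  refine ⟨N', hN'min, huniq, hcard, ?_⟩
  have h1 : ¬ N'.comap f ≤ M := by
    intro hle
    have h2 : N' ≤ M' := by
      have h3 : (N'.comap f).map f ≤ M.map f := Subgroup.map_mono hle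
      rwa [Subgroup.map_comap_eq_self_of_surjective hfsurj] at h3
    exact hN'min.1 (hcorefree _ hN'min.2.1 h2)
  refine hM.2 (M ⊔ N'.comap f)
    (lt_of_le_of_ne le_sup_left fun h => h1 (le_sup_right.trans (le_of_eq h.symm)))


end Structure

section Trichotomy

variable [Finite G]

/-- Per-step trichotomy for a maximal subgroup along a chief factor `T/A`:
either it covers the factor, or it avoids it and the factor is `G`-isomorphic to
the unique minimal normal subgroup of the primitive quotient. -/
lemma step_trichotomy {Mi : Subgroup G} (hMi : IsCoatom Mi)
    (hpsM : ∀ p : ℕ, p.Prime → p ∣ Mi.index → IsPSolvable p G)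
    {N' : Subgroup (G ⧸ Mi.normalCore)} (hN'min : IsMinNormal N')
    (huniq : ∀ X : Subgroup (G ⧸ Mi.normalCore), IsMinNormal X → X = N')
    {A T : Subgroup G} (hA : A.Normal) (hT : T.Normal) (hAT : A ≤ T)
    (hminF : IsMinNormal (T.map (@QuotientGroup.mk' G _ A hA))) :
    dval Mi (A, T) = 1 ∨
    (Mi ⊓ T ≤ A ∧ A ≤ Mi.normalCore ∧ dval Mi (A, T) = A.relIndex T ∧
     ∃ e : ↥(T.map (@QuotientGroup.mk' G _ A hA)) ≃* ↥N',
       ∀ (g : G) (x x' : ↥(T.map (@QuotientGroup.mk' G _ A hA))),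
         (x' : G ⧸ A) = QuotientGroup.mk g * (x : G ⧸ A) * (QuotientGroup.mk g)⁻¹ →
         ((e x' : ↥N') : G ⧸ Mi.normalCore) =
           QuotientGroup.mk g * ((e x : ↥N') : G ⧸ Mi.normalCore) *
             (QuotientGroup.mk g)⁻¹) := by
  haveI := hA
  haveI := hT
  by_cases hcop : Nat.gcd (A.relIndex T) Mi.index = 1
  · -- coprime: always covers
    left
    have dvd1 : dval Mi (A, T) ∣ A.relIndex T := dval_dvd_relindex Mi hAT
    have dvd2 : dval Mi (A, T) ∣ Mi.index := by
      have hc1 : (Mi ⊓ T).relIndex (A ⊔ (Mi ⊓ T)) * (A ⊔ (Mi ⊓ T)).relIndex T =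
          (Mi ⊓ T).relIndex T :=
        Subgroup.relIndex_mul_relIndex _ _ _ le_sup_right (sup_le hAT inf_le_right)
      have hc2 : (Mi ⊓ T).relIndex T = Mi.relIndex (Mi ⊔ T) :=
        (relindex_sup_of_normal Mi T hT).symm
      have hc3 : Mi.relIndex (Mi ⊔ T) ∣ Mi.index :=
        ⟨(Mi ⊔ T).index, (Subgroup.relIndex_mul_index (le_sup_left : Mi ≤ Mi ⊔ T)).symm⟩
      have hc4 : dval Mi (A, T) ∣ (Mi ⊓ T).relIndex T := by
        refine ⟨(Mi ⊓ T).relIndex (A ⊔ (Mi ⊓ T)), ?_⟩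
        rw [← hc1]
        show _ = (A ⊔ Mi ⊓ T).relIndex T * _
        ring
      rw [hc2] at hc4
      exact hc4.trans hc3
    have : dval Mi (A, T) ∣ 1 := hcop ▸ Nat.dvd_gcd dvd1 dvd2
    exact Nat.dvd_one.mp this
  · obtain ⟨p, hp, hpg⟩ := Nat.exists_prime_and_dvd hcop
    have hp1 : p ∣ A.relIndex T := hpg.trans (Nat.gcd_dvd_left _ _)
    have hp2 : p ∣ Mi.index := hpg.trans (Nat.gcd_dvd_right _ _)
    have hpsolQ : IsPSolvable p (G ⧸ A) :=
      isPSolvable_quotient hp A hA (hpsM p hp hp2)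
    have hcardF : Nat.card ↥(T.map (@QuotientGroup.mk' G _ A hA)) = A.relIndex T := by
      have h1 := Subgroup.relIndex_ker (QuotientGroup.mk' A) (K := T)
      rw [QuotientGroup.ker_mk'] at h1
      exact h1.symm
    obtain ⟨k, hk⟩ : ∃ k, Nat.card ↥(T.map (@QuotientGroup.mk' G _ A hA)) = p ^ k := by
      rcases min_normal_p_or_p' hp hpsolQ hminF with h | h
      · exact h
      · rw [hcardF] at h
        exact absurd hp1 h
    have hcomm : ∀ a b : G, a ∈ T → b ∈ T → a * b * a⁻¹ * b⁻¹ ∈ A := by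
      intro a b ha hb
      have hcab := minnormal_pgroup_comm hp hminF hk
        (QuotientGroup.mk' A a) (QuotientGroup.mk' A b) ⟨a, ha, rfl⟩ ⟨b, hb, rfl⟩
      have : QuotientGroup.mk' A (a * b * a⁻¹ * b⁻¹) = 1 := by
        have h2 : QuotientGroup.mk' A (a * b) = QuotientGroup.mk' A (b * a) := by
          rw [map_mul, map_mul, hcab]
        rw [show a * b * a⁻¹ * b⁻¹ = (a * b) * (b * a)⁻¹ by group, map_mul, map_inv, h2]
        group
      rwa [QuotientGroup.mk'_apply, QuotientGroup.eq_one_iff] at this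
    by_cases hTM : T ≤ Mi
    · left
      have h1 : Mi ⊓ T = T := inf_of_le_right hTM
      show (A ⊔ (Mi ⊓ T)).relIndex T = 1
      rw [h1, sup_of_le_right hAT]
      exact Subgroup.relIndex_self T
    by_cases hAM : A ≤ Mi
    · -- the interesting case: J is normal, giving cover or avoid
      set J := A ⊔ (Mi ⊓ T) with hJ
      have hAJ : A ≤ J := le_sup_left
      have hJT : J ≤ T := sup_le hAT inf_le_right
      have hJset : ∀ x, x ∈ J → x ∈ (A : Set G) * ((Mi ⊓ T : Subgroup G) : Set G) := by
        intro x hx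
        rw [← Subgroup.normal_mul]
        exact hx
      have hconjJ : ∀ g : G, g ∈ Mi ∨ g ∈ T → ∀ x ∈ J, g * x * g⁻¹ ∈ J := by
        intro g hg x hx
        obtain ⟨a, ha, w, hw, hxaw⟩ := hJset x hx
        have hxaw' : a * w = x := hxaw
        rw [← hxaw']
        rcases hg with hgMi | hgT
        · have h1 : g * a * g⁻¹ ∈ A := hA.conj_mem a (SetLike.mem_coe.mp ha) g
          have h2 : g * w * g⁻¹ ∈ Mi ⊓ T := by
            have hw' := SetLike.mem_coe.mp hw
            exact ⟨Subgroup.mul_mem _ (Subgroup.mul_mem _ hgMi hw'.1) (inv_mem hgMi),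
              hT.conj_mem w hw'.2 g⟩
          have : g * (a * w) * g⁻¹ = (g * a * g⁻¹) * (g * w * g⁻¹) := by group
          rw [this]
          exact Subgroup.mul_mem _ (hAJ h1) ((le_sup_right : Mi ⊓ T ≤ J) h2)
        · have hw' := SetLike.mem_coe.mp hw
          have h1 : g * a * g⁻¹ ∈ A := hA.conj_mem a (SetLike.mem_coe.mp ha) g
          have h2 : g * w * g⁻¹ * w⁻¹ ∈ A := hcomm g w hgT hw'.2
          have : g * (a * w) * g⁻¹ = (g * a * g⁻¹) * (g * w * g⁻¹ * w⁻¹) * w := by group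
          rw [this]
          exact Subgroup.mul_mem _ (Subgroup.mul_mem _ (hAJ h1) (hAJ h2)) ((le_sup_right : Mi ⊓ T ≤ J) hw')
      have hJnormal : J.Normal := by
        rw [← Subgroup.normalizer_eq_top_iff]
        have hMiN : Mi ≤ Subgroup.normalizer (J : Set G) := by
          intro g hg
          rw [Subgroup.mem_normalizer_iff]
          intro x
          constructor
          · intro hx
            exact hconjJ g (Or.inl hg) x hx
          · intro hx
            have := hconjJ g⁻¹ (Or.inl (inv_mem hg)) _ hx
            simpa [mul_assoc] using this
        have hTN : T ≤ Subgroup.normalizer (J : Set G) := by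
          intro g hg
          rw [Subgroup.mem_normalizer_iff]
          intro x
          constructor
          · intro hx
            exact hconjJ g (Or.inr hg) x hx
          · intro hx
            have := hconjJ g⁻¹ (Or.inr (inv_mem hg)) _ hx
            simpa [mul_assoc] using this
        have hMiT : Mi ⊔ T = ⊤ :=
          hMi.2 _ (lt_of_le_of_ne le_sup_left fun h =>
            hTM (le_sup_right.trans (le_of_eq h.symm)))
        rw [eq_top_iff, ← hMiT]
        exact sup_le hMiN hTN
      -- J maps to a normal subgroup of the chief factor
      have hJmapnorm : (J.map (QuotientGroup.mk' A)).Normal :=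
        hJnormal.map _ (QuotientGroup.mk'_surjective A)
      have hJmaple : J.map (QuotientGroup.mk' A) ≤ T.map (QuotientGroup.mk' A) :=
        Subgroup.map_mono hJT
      rcases hminF.2.2 _ hJmapnorm hJmaple with hcase | hcase
      · -- avoid
        right
        have hJA : J = A := by
          apply le_antisymm _ hAJ
          rw [Subgroup.map_eq_bot_iff, QuotientGroup.ker_mk'] at hcase
          exact hcase
        have hMiTA : Mi ⊓ T ≤ A := by rw [← hJA]; exact le_sup_right
        have hAcore : A ≤ Mi.normalCore := Subgroup.normal_le_normalCore.mpr hAM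
        have hdval : dval Mi (A, T) = A.relIndex T := by
          show (A ⊔ (Mi ⊓ T)).relIndex T = A.relIndex T
          rw [← hJ, hJA]
        refine ⟨hMiTA, hAcore, hdval, ?_⟩
        -- construct the equivariant isomorphism
        set φ : G ⧸ A →* G ⧸ Mi.normalCore :=
          QuotientGroup.map A Mi.normalCore (MonoidHom.id G) hAcore with hφ
        have hφmk : ∀ g : G, φ (QuotientGroup.mk g) = QuotientGroup.mk g := by
          intro g
          rfl
        set F := T.map (@QuotientGroup.mk' G _ A hA) with hF
        have hmapcomp : F.map φ = T.map (QuotientGroup.mk' Mi.normalCore) := by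
          rw [hF, Subgroup.map_map]
          congr 1
        have hKmin : IsMinNormal (T.map (QuotientGroup.mk' Mi.normalCore)) := by
          refine ⟨?_, hT.map _ (QuotientGroup.mk'_surjective _), ?_⟩
          · intro hbot
            rw [Subgroup.map_eq_bot_iff, QuotientGroup.ker_mk'] at hbot
            exact hTM (hbot.trans Mi.normalCore_le)
          · intro Y hYn hYle
            by_cases hYb : Y = ⊥
            · exact Or.inl hYb
            right
            set P := Y.comap (QuotientGroup.mk' Mi.normalCore) ⊓ T with hP
            haveI h1 := hYn.comap (QuotientGroup.mk' Mi.normalCore)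
            have hPnorm : P.Normal := Subgroup.normal_inf_normal _ _
            have hAP : A ≤ P := by
              refine le_inf (fun a ha => ?_) hAT
              have ha' : a ∈ Mi.normalCore := hAcore ha
              have hone : (QuotientGroup.mk' Mi.normalCore) a = 1 := by
                rw [QuotientGroup.mk'_apply, QuotientGroup.eq_one_iff]; exact ha'
              simp only [Subgroup.mem_comap, hone]
              exact Y.one_mem
            have hPmapnorm : (P.map (QuotientGroup.mk' A)).Normal :=
              hPnorm.map _ (QuotientGroup.mk'_surjective A)
            rcases hminF.2.2 _ hPmapnorm (Subgroup.map_mono inf_le_right) with hc | hc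
            · exfalso
              apply hYb
              rw [eq_bot_iff]
              intro y hy
              obtain ⟨t, ht, rfl⟩ := hYle hy
              have htP : t ∈ P := ⟨Subgroup.mem_comap.mpr hy, ht⟩
              have : QuotientGroup.mk' A t ∈ P.map (QuotientGroup.mk' A) := ⟨t, htP, rfl⟩
              rw [hc, Subgroup.mem_bot] at this
              have htA : t ∈ A := by
                rwa [QuotientGroup.mk'_apply, QuotientGroup.eq_one_iff] at this
              simp only [Subgroup.mem_bot, QuotientGroup.mk'_apply, QuotientGroup.eq_one_iff]
              exact hAcore htA
            · have hPT : P = T := by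
                have h2 := congrArg (Subgroup.comap (QuotientGroup.mk' A)) hc
                rw [Subgroup.comap_map_eq, Subgroup.comap_map_eq, QuotientGroup.ker_mk',
                  sup_of_le_left hAP, sup_of_le_left hAT] at h2
                exact h2
              have hTle : T ≤ Y.comap (QuotientGroup.mk' Mi.normalCore) := by
                rw [← hPT]; exact inf_le_left
              refine le_antisymm hYle ?_
              rw [← Subgroup.map_comap_eq_self_of_surjective
                (QuotientGroup.mk'_surjective Mi.normalCore) Y]
              exact Subgroup.map_mono hTle
        have hKeq : T.map (QuotientGroup.mk' Mi.normalCore) = N' := huniq _ hKmin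
        have hinjF : ∀ x : ↥F, φ (x : G ⧸ A) = 1 → (x : G ⧸ A) = 1 := by
          rintro ⟨x, hx⟩ h1
          obtain ⟨t, ht, rfl⟩ := hx
          have : QuotientGroup.mk' Mi.normalCore t = 1 := h1
          rw [QuotientGroup.mk'_apply, QuotientGroup.eq_one_iff] at this
          have htA : t ∈ A := hMiTA ⟨Mi.normalCore_le this, ht⟩
          show QuotientGroup.mk' A t = 1
          rw [QuotientGroup.mk'_apply, QuotientGroup.eq_one_iff]
          exact htA
        have hmemN' : ∀ x : ↥F, φ (x : G ⧸ A) ∈ N' := by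
          intro x
          rw [← hKeq, ← hmapcomp]
          exact ⟨(x : G ⧸ A), x.2, rfl⟩
        set ψ₀ : ↥F →* ↥N' := MonoidHom.codRestrict (φ.comp F.subtype) N' hmemN' with hψ₀
        have hψ₀bij : Function.Bijective ψ₀ := by
          constructor
          · intro x y hxy
            have h2 : φ (x : G ⧸ A) = φ (y : G ⧸ A) := congrArg Subtype.val hxy
            have h3 : φ ((x : G ⧸ A) * (y : G ⧸ A)⁻¹) = 1 := by
              rw [map_mul, map_inv, h2]
              group
            have h4 := hinjF ⟨(x : G ⧸ A) * (y : G ⧸ A)⁻¹,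
              Subgroup.mul_mem _ x.2 (inv_mem y.2)⟩ h3
            apply Subtype.ext
            have h5 : (x : G ⧸ A) * (y : G ⧸ A)⁻¹ = 1 := h4
            rw [mul_inv_eq_one] at h5
            exact h5
          · rintro ⟨y, hy⟩
            rw [← hKeq, ← hmapcomp] at hy
            obtain ⟨x, hx, hxy⟩ := hy
            exact ⟨⟨x, hx⟩, Subtype.ext hxy⟩
        set ψ := MulEquiv.ofBijective ψ₀ hψ₀bij with hψ
        refine ⟨ψ, ?_⟩
        intro g x x' hrel
        have hcoe : ∀ z : ↥F, ((ψ z : ↥N') : G ⧸ Mi.normalCore) = φ (z : G ⧸ A) := by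
          intro z
          rfl
        rw [hcoe, hcoe, hrel, map_mul, map_mul, map_inv]
        have hmkg : φ (QuotientGroup.mk g) = QuotientGroup.mk g := hφmk g
        rw [hmkg]
      · -- cover
        left
        have hJeqT : J = T := by
          have h2 := congrArg (Subgroup.comap (QuotientGroup.mk' A)) hcase
          rw [Subgroup.comap_map_eq, Subgroup.comap_map_eq, QuotientGroup.ker_mk',
            sup_of_le_left hAJ, sup_of_le_left hAT] at h2
          exact h2
        show (A ⊔ (Mi ⊓ T)).relIndex T = 1
        rw [← hJ, hJeqT]
        exact Subgroup.relIndex_self T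
    · -- A ⊄ Mi: cover by the index computation
      left
      have hMiA : Mi ⊔ A = ⊤ :=
        hMi.2 _ (lt_of_le_of_ne le_sup_left fun h =>
          hAM (le_sup_right.trans (le_of_eq h.symm)))
      have hMiT : Mi ⊔ T = ⊤ :=
        hMi.2 _ (lt_of_le_of_ne le_sup_left fun h =>
          hTM (le_sup_right.trans (le_of_eq h.symm)))
      have e1 : (Mi ⊓ A).relIndex Mi = A.index := by
        rw [inf_comm, Subgroup.inf_relIndex_right, ← Subgroup.relIndex_sup_left (K := A),
          sup_comm, hMiA, Subgroup.relIndex_top_right]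
      have e2 : (Mi ⊓ T).relIndex Mi = T.index := by
        rw [inf_comm, Subgroup.inf_relIndex_right, ← Subgroup.relIndex_sup_left (K := T),
          sup_comm, hMiT, Subgroup.relIndex_top_right]
      have hchain : (Mi ⊓ A).relIndex (Mi ⊓ T) * (Mi ⊓ T).relIndex Mi =
          (Mi ⊓ A).relIndex Mi :=
        Subgroup.relIndex_mul_relIndex _ _ _ (inf_le_inf_left Mi hAT) inf_le_left
      have hAidx : A.relIndex T * T.index = A.index := Subgroup.relIndex_mul_index hAT
      have hTne : T.index ≠ 0 := index_ne_zero' T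
      have heq : (Mi ⊓ A).relIndex (Mi ⊓ T) = A.relIndex T := by
        have h3 : (Mi ⊓ A).relIndex (Mi ⊓ T) * T.index = A.relIndex T * T.index := by
          rw [hAidx, ← e1, ← hchain, e2]
        exact Nat.eq_of_mul_eq_mul_right (Nat.pos_of_ne_zero hTne) h3
      have hstep := step_identity A T Mi hA hAT
      have hrelne : A.relIndex T ≠ 0 := relindex_ne_zero' A T
      rw [heq] at hstep
      have h4 : dval Mi (A, T) * A.relIndex T = 1 * A.relIndex T := by
        show (A ⊔ (Mi ⊓ T)).relIndex T * A.relIndex T = 1 * A.relIndex T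
        rw [one_mul, ← hstep]
      exact Nat.eq_of_mul_eq_mul_right (Nat.pos_of_ne_zero hrelne) h4

end Trichotomy



section Counting

variable [Finite G]

lemma list_prod_dvd {α : Type*} (l : List α) (f g : α → ℕ) (h : ∀ t ∈ l, f t ∣ g t) :
    (l.map f).prod ∣ (l.map g).prod := by
  induction l with
  | nil => simp
  | cons a l ih =>
    simp only [List.map_cons, List.prod_cons]
    exact mul_dvd_mul (h a List.mem_cons_self) (ih fun t ht => h t (List.mem_cons_of_mem a ht))

lemma list_prod_eq_of_dvd {α : Type*} (l : List α) (f g : α → ℕ)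
    (h : ∀ t ∈ l, f t ∣ g t) (hprod : (l.map f).prod = (l.map g).prod)
    (hnz : (l.map g).prod ≠ 0) : ∀ t ∈ l, f t = g t := by
  induction l with
  | nil => intro t ht; simp at ht
  | cons a l ih =>
    simp only [List.map_cons, List.prod_cons] at hprod hnz
    have hfa := h a List.mem_cons_self
    have hP := list_prod_dvd l f g fun t ht => h t (List.mem_cons_of_mem a ht)
    have hga : g a ≠ 0 := fun hz => hnz (by rw [hz, zero_mul])
    have hPg : (l.map g).prod ≠ 0 := fun hz => hnz (by rw [hz, mul_zero])
    obtain ⟨c, hc⟩ := hfa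
    obtain ⟨d, hd⟩ := hP
    have hfz : f a ≠ 0 := by
      intro hz
      rw [hz, zero_mul] at hprod
      exact hnz hprod.symm
    have hPf : (l.map f).prod ≠ 0 := by
      intro hz
      rw [hz, mul_zero] at hprod
      exact hnz hprod.symm
    have hcd : c * d = 1 := by
      have h1 : f a * (l.map f).prod = (f a * (l.map f).prod) * (c * d) := by
        calc f a * (l.map f).prod = g a * (l.map g).prod := hprod
          _ = (f a * c) * ((l.map f).prod * d) := by rw [← hc, ← hd]
          _ = (f a * (l.map f).prod) * (c * d) := by ring
      have h2 : (f a * (l.map f).prod) * 1 = (f a * (l.map f).prod) * (c * d) := by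
        rw [mul_one]; exact h1
      have h3 : f a * (l.map f).prod ≠ 0 := mul_ne_zero hfz hPf
      exact (Nat.eq_of_mul_eq_mul_left (Nat.pos_of_ne_zero h3) h2).symm
    have hc1 : c = 1 := Nat.dvd_one.mp ⟨d, hcd.symm⟩
    have hd1 : d = 1 := Nat.dvd_one.mp ⟨c, by rw [mul_comm] at hcd; exact hcd.symm⟩
    have hfga : f a = g a := by rw [hc, hc1, mul_one]
    have hprod' : (l.map f).prod = (l.map g).prod := by rw [hd, hd1, mul_one]
    intro t ht
    rcases List.mem_cons.mp ht with rfl | ht'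
    · exact hfga
    · exact ih (fun t ht => h t (List.mem_cons_of_mem a ht)) hprod' hPg t ht'

lemma prod_swap_list {α ι : Type*} (l : List α) (S : Finset ι) (d : ι → α → ℕ) :
    (l.map (fun t => ∏ i ∈ S, d i t)).prod = ∏ i ∈ S, (l.map (d i)).prod := by
  induction l with
  | nil => simp
  | cons a l ih =>
    simp only [List.map_cons, List.prod_cons, ih]
    rw [← Finset.prod_mul_distrib]

/-- Transfer of equivariant isomorphisms through composition. -/
lemma equivariant_comp {L Ci Cj : Subgroup G} [L.Normal] [Ci.Normal] [Cj.Normal]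
    {F : Subgroup (G ⧸ L)} (hFnorm : F.Normal)
    {Ni : Subgroup (G ⧸ Ci)} {Nj : Subgroup (G ⧸ Cj)}
    (ei : ↥F ≃* ↥Ni)
    (hei : ∀ (g : G) (x x' : ↥F),
      (x' : G ⧸ L) = QuotientGroup.mk g * (x : G ⧸ L) * (QuotientGroup.mk g)⁻¹ →
      ((ei x' : ↥Ni) : G ⧸ Ci) =
        QuotientGroup.mk g * ((ei x : ↥Ni) : G ⧸ Ci) * (QuotientGroup.mk g)⁻¹)
    (ej : ↥F ≃* ↥Nj)
    (hej : ∀ (g : G) (x x' : ↥F),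
      (x' : G ⧸ L) = QuotientGroup.mk g * (x : G ⧸ L) * (QuotientGroup.mk g)⁻¹ →
      ((ej x' : ↥Nj) : G ⧸ Cj) =
        QuotientGroup.mk g * ((ej x : ↥Nj) : G ⧸ Cj) * (QuotientGroup.mk g)⁻¹) :
    ∃ e : ↥Ni ≃* ↥Nj, ∀ (g : G) (x x' : ↥Ni),
      (x' : G ⧸ Ci) = QuotientGroup.mk g * (x : G ⧸ Ci) * (QuotientGroup.mk g)⁻¹ →
      ((e x' : ↥Nj) : G ⧸ Cj) =
        QuotientGroup.mk g * ((e x : ↥Nj) : G ⧸ Cj) * (QuotientGroup.mk g)⁻¹ := by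
  refine ⟨ei.symm.trans ej, ?_⟩
  intro g x x' hrel
  set u := ei.symm x with hu'
  have hu : ei u = x := ei.apply_symm_apply x
  have hmemF : QuotientGroup.mk g * (u : G ⧸ L) * (QuotientGroup.mk g)⁻¹ ∈ F :=
    hFnorm.conj_mem _ u.2 _
  set u'' : ↥F := ⟨_, hmemF⟩ with hu''
  have h1 : ei u'' = x' := by
    apply Subtype.ext
    have h2 := hei g u u'' rfl
    rw [h2, hu, ← hrel]
  have h3 : ei.symm x' = u'' := by rw [← h1, ei.symm_apply_apply]
  show ((ej (ei.symm x') : ↥Nj) : G ⧸ Cj) = _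
  rw [h3]
  exact hej g u u'' rfl

/-- If `G = Mk * W` as a set product then the index of the intersection is the
product of the indices. -/
lemma index_inf_of_mul {Mk W : Subgroup G}
    (h : ∀ g : G, ∃ m ∈ Mk, ∃ w ∈ W, g = m * w) :
    (W ⊓ Mk).index = Mk.index * W.index := by
  have h1 : (W ⊓ Mk).relIndex W * W.index = (W ⊓ Mk).index :=
    Subgroup.relIndex_mul_index inf_le_left
  have h2 : (W ⊓ Mk).relIndex W = Mk.relIndex W := by
    rw [inf_comm]; exact Subgroup.inf_relIndex_right Mk W
  have h3 : Mk.relIndex W = Mk.index := by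
    have hwd : ∀ a b : ↥W, @Setoid.r _ (QuotientGroup.leftRel (Mk.subgroupOf W)) a b →
        (QuotientGroup.mk (a : G) : G ⧸ Mk) = QuotientGroup.mk (b : G) := by
      intro a b hab
      rw [QuotientGroup.leftRel_apply] at hab
      rw [Subgroup.mem_subgroupOf] at hab
      exact QuotientGroup.eq.mpr (by simpa using hab)
    set θ : W ⧸ (Mk.subgroupOf W) → G ⧸ Mk :=
      fun q => Quotient.liftOn' q (fun w => (QuotientGroup.mk (w : G) : G ⧸ Mk)) hwd with hθ
    have hinj : Function.Injective θ := by
      intro a b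
      refine Quotient.inductionOn₂' a b ?_
      intro a b hab
      apply Quotient.sound'
      rw [QuotientGroup.leftRel_apply, Subgroup.mem_subgroupOf]
      have := QuotientGroup.eq.mp hab
      simpa using this
    have hsurj : Function.Surjective θ := by
      intro q
      refine Quotient.inductionOn' q ?_
      intro g
      obtain ⟨m, hm, w, hw, hg⟩ := h g⁻¹
      refine ⟨Quotient.mk'' ⟨w⁻¹, inv_mem hw⟩, ?_⟩
      show (QuotientGroup.mk ((w : G))⁻¹ : G ⧸ Mk) = QuotientGroup.mk g
      rw [QuotientGroup.eq]
      have : g = w⁻¹ * m⁻¹ := by rw [← mul_inv_rev, ← hg, inv_inv]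
      rw [this]
      simpa using (inv_mem hm)
    rw [Subgroup.relIndex, Subgroup.index_eq_card, Subgroup.index_eq_card]
    exact Nat.card_congr (Equiv.ofBijective θ ⟨hinj, hsurj⟩)
  rw [← h1, h2, h3]

end Counting



section Main

variable [Finite G]

lemma main_counting {n : ℕ} (M : Fin n → Subgroup G) (hco : ∀ i, IsCoatom (M i))
    (N' : ∀ i, Subgroup (G ⧸ (M i).normalCore))
    (hN' : ∀ i, IsMinNormal (N' i))
    (huniq : ∀ i (X : Subgroup (G ⧸ (M i).normalCore)), IsMinNormal X → X = N' i)
    (hpsM : ∀ i, ∀ p : ℕ, p.Prime → p ∣ (M i).index → IsPSolvable p G)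
    (hmod : ∀ i j, i ≠ j → ¬ ConjIso (N' i) (N' j))
    (S : Finset (Fin n))
    (hidx : (S.inf M).index = ∏ i ∈ S, (M i).index)
    {K L : Subgroup G} (hK : K.Normal) (hL : L.Normal) (hLK : L ≤ K)
    (hchief : IsMinNormal (K.map (@QuotientGroup.mk' G _ L hL))) :
    K ≤ L ⊔ (S.inf M ⊓ K) ∨
    ((S.inf M ⊓ K) ≤ L ∧ ∃ i ∈ S, L ≤ (M i).normalCore ∧
      ∃ e : ↥(K.map (@QuotientGroup.mk' G _ L hL)) ≃* ↥(N' i),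
        ∀ (g : G) (x x' : ↥(K.map (@QuotientGroup.mk' G _ L hL))),
          (x' : G ⧸ L) = QuotientGroup.mk g * (x : G ⧸ L) * (QuotientGroup.mk g)⁻¹ →
          ((e x' : ↥(N' i)) : G ⧸ (M i).normalCore) =
            QuotientGroup.mk g * ((e x : ↥(N' i)) : G ⧸ (M i).normalCore) *
              (QuotientGroup.mk g)⁻¹) := by
  classical
  haveI := hL
  haveI := hK
  set W := S.inf M with hW
  have hWle : ∀ i ∈ S, W ≤ M i := fun i hi => Finset.inf_le hi
  -- build the chief chain through L and K
  obtain ⟨l₁, hl₁⟩ := exists_chain ((⊥ : Subgroup G).relIndex L) ⊥ L inferInstance hL bot_le rfl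
  obtain ⟨l₂, hl₂⟩ := exists_chain (K.relIndex ⊤) K ⊤ hK inferInstance le_top rfl
  have hstepLK : ChainStep L K := ⟨hL, hK, hLK, hchief⟩
  have hchain2 : Chain L ⊤ (K :: l₂) := ⟨hstepLK, hl₂⟩
  obtain ⟨hchainfull, hsteps⟩ := chain_append hl₁ hchain2
  set l := l₁ ++ K :: l₂ with hldef
  set st := steps ⊥ l with hst
  clear_value st
  have hmemLK : (L, K) ∈ st := by
    rw [hsteps]
    exact List.mem_append_right _ List.mem_cons_self
  -- telescoping
  have htel : ∀ V : Subgroup G, V.index = ((st.map (dval V))).prod := by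
    intro V
    have h1 := telescope V ⊥ ⊤ l hchainfull
    rw [← hst] at h1
    rw [Subgroup.relIndex_bot_left, inf_bot_eq, inf_top_eq] at h1
    rw [Subgroup.relIndex_bot_left] at h1
    -- h1 : Nat.card ↥⊤ = prod * Nat.card ↥V
    have h2 : Nat.card ↥(⊤ : Subgroup G) = Nat.card G :=
      Nat.card_congr Subgroup.topEquiv.toEquiv
    have h3 : V.index * Nat.card ↥V = Nat.card G := Subgroup.index_mul_card V
    have h4 : Nat.card ↥V ≠ 0 := Nat.card_pos.ne'
    apply Nat.eq_of_mul_eq_mul_right (Nat.pos_of_ne_zero h4)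
    rw [h3, ← h2, h1]
  -- entrywise analysis
  have hdvd : ∀ t ∈ st, (∏ i ∈ S, dval (M i) t) ∣ dval W t := by
    intro t ht
    obtain ⟨A, T⟩ := t
    obtain ⟨hAn, hTn, hAT, hminF⟩ := mem_steps ⊥ ⊤ l hchainfull A T (hst ▸ ht)
    by_cases hall : ∀ i ∈ S, dval (M i) (A, T) = 1
    · rw [Finset.prod_eq_one hall]
      exact one_dvd _
    push_neg at hall
    obtain ⟨i₀, hi₀S, hi₀ne⟩ := hall
    have tri₀ := step_trichotomy (hco i₀) (hpsM i₀) (hN' i₀) (huniq i₀) hAn hTn hAT hminF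
    rcases tri₀ with h | ⟨havoid₀, hcore₀, hd₀, e₀, he₀⟩
    · exact absurd h hi₀ne
    have hothers : ∀ j ∈ S, j ≠ i₀ → dval (M j) (A, T) = 1 := by
      intro j hjS hjne
      rcases step_trichotomy (hco j) (hpsM j) (hN' j) (huniq j) hAn hTn hAT hminF with
        h | ⟨_, hcorej, hdj, ej2, hej2⟩
      · exact h
      exfalso
      obtain ⟨e, he⟩ := equivariant_comp (L := A) hminF.2.1 e₀ he₀ ej2 hej2
      exact hmod i₀ j (Ne.symm hjne) ⟨e, he⟩
    have hprodeq : (∏ i ∈ S, dval (M i) (A, T)) = dval (M i₀) (A, T) :=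
      Finset.prod_eq_single_of_mem i₀ hi₀S fun j hj hjne => hothers j hj hjne
    have hdWdvd : dval W (A, T) ∣ A.relIndex T := dval_dvd_relindex W hAT
    have hd₀dvd : dval (M i₀) (A, T) ∣ dval W (A, T) := dval_dvd_of_le (hWle i₀ hi₀S) _
    have hdWeq : dval W (A, T) = A.relIndex T := by
      refine Nat.dvd_antisymm hdWdvd ?_
      rw [← hd₀]
      exact hd₀dvd
    rw [hprodeq, hd₀, ← hdWeq]
  -- products agree
  have hprods : ((st.map (fun t => ∏ i ∈ S, dval (M i) t)).prod) = (st.map (dval W)).prod := by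
    rw [prod_swap_list]
    have h1 : ∀ i ∈ S, (st.map (dval (M i))).prod = (M i).index := fun i _ => (htel (M i)).symm
    rw [Finset.prod_congr rfl h1, ← hidx, htel W]
  have hnz : (st.map (dval W)).prod ≠ 0 := by
    rw [← htel W]
    exact index_ne_zero' W
  have hentry := list_prod_eq_of_dvd st _ _ hdvd hprods hnz
  -- analyze the step (L, K)
  have hLK' := hentry (L, K) hmemLK
  by_cases hall : ∀ i ∈ S, dval (M i) (L, K) = 1
  · left
    have h1 : dval W (L, K) = 1 := by
      rw [← hLK', Finset.prod_eq_one hall]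
    have h2 : K ≤ L ⊔ (W ⊓ K) := Subgroup.relIndex_eq_one.mp h1
    exact h2
  push_neg at hall
  obtain ⟨i₀, hi₀S, hi₀ne⟩ := hall
  obtain ⟨hAn, hTn, hAT, hminF⟩ := mem_steps ⊥ ⊤ l hchainfull L K (hst ▸ hmemLK)
  rcases step_trichotomy (hco i₀) (hpsM i₀) (hN' i₀) (huniq i₀) hAn hTn hAT hminF with
    h | ⟨havoid₀, hcore₀, hd₀, e₀, he₀⟩
  · exact absurd h hi₀ne
  right
  have hothers : ∀ j ∈ S, j ≠ i₀ → dval (M j) (L, K) = 1 := by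
    intro j hjS hjne
    rcases step_trichotomy (hco j) (hpsM j) (hN' j) (huniq j) hAn hTn hAT hminF with
      h | ⟨_, hcorej, hdj, ej2, hej2⟩
    · exact h
    exfalso
    obtain ⟨e, he⟩ := equivariant_comp (L := L) hminF.2.1 e₀ he₀ ej2 hej2
    exact hmod i₀ j (Ne.symm hjne) ⟨e, he⟩
  have hdWeq : dval W (L, K) = L.relIndex K := by
    rw [← hLK', Finset.prod_eq_single_of_mem i₀ hi₀S fun j hj hjne => hothers j hj hjne, hd₀]
  have havoidW : W ⊓ K ≤ L := by
    have hchainJ : L.relIndex (L ⊔ (W ⊓ K)) * (L ⊔ (W ⊓ K)).relIndex K = L.relIndex K :=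
      Subgroup.relIndex_mul_relIndex _ _ _ le_sup_left (sup_le hLK inf_le_right)
    have h2 : (L ⊔ (W ⊓ K)).relIndex K = L.relIndex K := hdWeq
    have h3 : L.relIndex K ≠ 0 := relindex_ne_zero' L K
    have h4 : L.relIndex (L ⊔ (W ⊓ K)) = 1 := by
      have h5 : L.relIndex (L ⊔ (W ⊓ K)) * L.relIndex K = 1 * L.relIndex K := by
        rw [one_mul]
        conv_lhs => rw [← h2]
        exact hchainJ
      exact Nat.eq_of_mul_eq_mul_right (Nat.pos_of_ne_zero h3) h5
    have h6 : L ⊔ (W ⊓ K) ≤ L := Subgroup.relIndex_eq_one.mp h4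
    exact le_sup_right.trans h6
  exact ⟨havoidW, i₀, hi₀S, hcore₀, e₀, he₀⟩

end Main



end Stmt13

open Stmt13

theorem stmt13 {G : Type*} [Group G] [Finite G] {n : ℕ}
    (U : Subgroup G) (M : Fin n → Subgroup G)
    (hU : IsRegularIntersectionOf U M) :
    U.index = ∏ i, (M i).index ∧
    ∀ (K L : Subgroup G) (_ : K.Normal) (hLn : L.Normal), L ≤ K →
      IsMinNormal (K.map (@QuotientGroup.mk' G _ L hLn)) →
      ((K : Set G) = (L : Set G) * ((U ⊓ K : Subgroup G) : Set G) ∨ U ⊓ K ≤ L) := by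
  classical
  obtain ⟨hco, hps, hUeq, hmod4⟩ := hU
  have hUle : ∀ i, U ≤ M i := fun i => (le_of_eq hUeq).trans (iInf_le M i)
  have hpsM : ∀ i, ∀ p : ℕ, p.Prime → p ∣ (M i).index → IsPSolvable p G := by
    intro i p hp hdvd
    exact hps p hp (hdvd.trans (Subgroup.index_dvd_of_le (hUle i)))
  have hstruct := fun i => primitive_structure (hco i) (hpsM i)
  choose N' hN'min huniq hcard hsupN using hstruct
  have hmod : ∀ i j, i ≠ j → ¬ ConjIso (N' i) (N' j) :=
    fun i j hne => (hmod4 i j hne (N' i) (N' j) (hN'min i) (hN'min j)).1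
  have hidx : ∀ S : Finset (Fin n), (S.inf M).index = ∏ i ∈ S, (M i).index := by
    intro S
    induction S using Finset.induction with
    | empty => simp
    | @insert k S hk ih =>
      rw [Finset.inf_insert, Finset.prod_insert hk]
      set Ck := (M k).normalCore with hCk
      set R := (N' k).comap (QuotientGroup.mk' Ck) with hR
      haveI hRnorm : R.Normal := (hN'min k).2.1.comap _
      have hLR : Ck ≤ R := by
        intro a ha
        have h1 : (QuotientGroup.mk' Ck) a = 1 := by
          rw [QuotientGroup.mk'_apply, QuotientGroup.eq_one_iff]; exact ha
        simp only [hR, Subgroup.mem_comap, h1]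
        exact (N' k).one_mem
      have hmapR : R.map (QuotientGroup.mk' Ck) = N' k :=
        Subgroup.map_comap_eq_self_of_surjective (QuotientGroup.mk'_surjective _) _
      have hchief : IsMinNormal (R.map (QuotientGroup.mk' Ck)) := by
        rw [hmapR]; exact hN'min k
      have hcc := main_counting M hco N' hN'min huniq hpsM hmod S ih
        hRnorm (Subgroup.normalCore_normal (M k)) hLR hchief
      rcases hcc with hcover | ⟨_, i₀, hi₀S, _, e, he⟩
      · have hsupRMk : M k ⊔ R = ⊤ := hsupN k
        have hprod : ∀ g : G, ∃ m ∈ M k, ∃ w ∈ S.inf M, g = m * w := by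
          intro g
          have h1 : g ∈ (↑(M k) : Set G) * ↑R := by
            rw [← Subgroup.mul_normal, hsupRMk]
            rw [Subgroup.coe_top]
            exact Set.mem_univ g
          obtain ⟨m, hm, r, hr, hmr⟩ := h1
          have hmr' : m * r = g := hmr
          have h2 : r ∈ (↑Ck : Set G) * ↑(S.inf M ⊓ R) := by
            rw [← Subgroup.normal_mul]
            exact hcover (SetLike.mem_coe.mp hr)
          obtain ⟨c, hc, w, hw, hcw⟩ := h2
          have hcw' : c * w = r := hcw
          refine ⟨m * c, Subgroup.mul_mem _ (SetLike.mem_coe.mp hm)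
            ((M k).normalCore_le (SetLike.mem_coe.mp hc)), w,
            (Subgroup.mem_inf.mp (SetLike.mem_coe.mp hw)).1, ?_⟩
          rw [← hmr', ← hcw', mul_assoc]
        have h3 := index_inf_of_mul hprod
        rw [inf_comm] at h3
        rw [h3, ih]
      · exfalso
        have hkne : (k : Fin n) ≠ i₀ := fun h => hk (h ▸ hi₀S)
        apply hmod k i₀ hkne
        show ConjIso (N' k) (N' i₀)
        rw [← hmapR]
        exact ⟨e, he⟩
  have hUuniv : Finset.univ.inf M = U := by
    rw [hUeq, Finset.inf_eq_iInf]
    simp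
  constructor
  · rw [← hUuniv, hidx Finset.univ]
  · intro K L hKn hLn hLKle hchief
    have hcc := main_counting M hco N' hN'min huniq hpsM hmod Finset.univ (hidx _)
      hKn hLn hLKle hchief
    rw [hUuniv] at hcc
    rcases hcc with hcover | ⟨havoid, _⟩
    · left
      have hJK : L ⊔ (U ⊓ K) = K := le_antisymm (sup_le hLKle inf_le_right) hcover
      haveI := hLn
      rw [← Subgroup.normal_mul L (U ⊓ K), hJK]
    · right
      exact havoid
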